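/- Let p be a prime and d = 1 + p^{i_2} + ⋯ + p^{i_p} with 0 ≤ i_2 ≤ ⋯ ≤ i_p and (i_2,…,i_p) ≠ (0,…,0). Then f_d(x) = x^d is a GAPN function on 𝔽_{p^n} if and only if the kernel of the 𝔽_p-linear map φ_d(x) = x + x^{p^{i_2}} + ⋯ + x^{p^{i_p}} on 𝔽_{p^n} equals the prime subfield 𝔽_p. -/

import Mathlib

open scoped BigOperators

/-- `f` is a generalized almost perfect nonlinear (GAPN) function on `F`. -/
def IsGAPN (p : ℕ) {F : Type*} [Field F] (f : F → F) : Prop :=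
  ∀ a : F, a ≠ 0 → ∀ b : F,
    {x : F | ∑ i ∈ Finset.range p, f (x + i • a) = b}.ncard ≤ p

section aux
variable {R : Type*} [CommRing R] (p : ℕ) [hp : Fact p.Prime] [CharP R p]

lemma natCast_pow_pow (i m : ℕ) : ((i : R)) ^ (p ^ m) = i := by
  induction m with
  | zero => simp
  | succ m ih =>
      rw [pow_succ, pow_mul, ih]
      exact map_natCast (frobenius R p) i

lemma sum_univ_zmod (g : ZMod p → R) :
    ∑ x : ZMod p, g x = ∑ i ∈ Finset.range p, g (i : ℕ) := by
  haveI : NeZero p := ⟨hp.out.ne_zero⟩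
  refine Finset.sum_nbij' (fun x => x.val) (fun i => (i : ZMod p)) ?_ ?_ ?_ ?_ ?_
  · intro a _; exact Finset.mem_range.2 (ZMod.val_lt a)
  · intro a _; exact Finset.mem_univ _
  · intro a _; exact ZMod.natCast_rightInverse a
  · intro a ha; exact ZMod.val_cast_of_lt (Finset.mem_range.1 ha)
  · intro a _; rw [ZMod.natCast_rightInverse a]

lemma sum_range_natCast_pow (k : ℕ) :
    ∑ i ∈ Finset.range p, ((i : R)) ^ k
      = ZMod.castHom (dvd_refl p) R (∑ x : ZMod p, x ^ k) := by
  rw [map_sum, sum_univ_zmod]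
  simp

end aux

section aux2
variable {R : Type*} [CommRing R] (p : ℕ) [hp : Fact p.Prime] [CharP R p]

lemma sum_range_natCast_pow_eq_zero {k : ℕ} (hk : k < p - 1) :
    ∑ i ∈ Finset.range p, ((i : R)) ^ k = 0 := by
  rw [sum_range_natCast_pow, FiniteField.sum_pow_lt_card_sub_one _ _ (by rwa [ZMod.card]),
    map_zero]

lemma sum_range_natCast_pow_card_sub_one :
    ∑ i ∈ Finset.range p, ((i : R)) ^ (p - 1) = -1 := by
  rw [sum_range_natCast_pow]
  have : ∑ x : ZMod p, x ^ (p - 1) = -1 := by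
    rw [← Finset.add_sum_erase Finset.univ _ (Finset.mem_univ (0 : ZMod p))]
    rw [zero_pow (by have := hp.out.two_le; omega), zero_add]
    rw [Finset.sum_congr rfl (fun x hx => ZMod.pow_card_sub_one_eq_one
      (Finset.mem_erase.1 hx).1), Finset.sum_const, nsmul_eq_mul, mul_one]
    rw [Finset.card_erase_of_mem (Finset.mem_univ _), Finset.card_univ, ZMod.card]
    have h1 : (1:ℕ) ≤ p := hp.out.one_lt.le
    push_cast [Nat.cast_sub h1]
    simp [CharP.cast_eq_zero]
  rw [this, map_neg, map_one]

end aux2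

section key
variable {R : Type*} [CommRing R] (m : ℕ) [hp : Fact (m+1).Prime] [CharP R (m+1)]

lemma key_identity (v : R) (w : Fin m → R) :
    ∑ i ∈ Finset.range (m+1), ((v + i) * ∏ j, (w j + i))
      = -(v + ∑ j, w j) + ∑ i ∈ Finset.range (m+1), ((i : R)) ^ (m+1) := by
  have hm : 1 ≤ m := by have := hp.out.two_le; omega
  set W : Fin (m+1) → R := Fin.cons v w with hW
  set S : ℕ → R := fun k => ∑ i ∈ Finset.range (m+1), ((i : R)) ^ k with hS
  have hprod : ∀ i : ℕ, (v + (i:R)) * ∏ j, (w j + i) = ∏ s, (W s + i) := by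
    intro i
    rw [Fin.prod_univ_succ]
    simp [hW]
  have hsum : v + ∑ j, w j = ∑ s, W s := by rw [Fin.sum_univ_succ]; simp [hW]
  calc ∑ i ∈ Finset.range (m+1), ((v + i) * ∏ j, (w j + i))
      = ∑ i ∈ Finset.range (m+1), ∏ s, (W s + (i:R)) := by
        exact Finset.sum_congr rfl fun i _ => hprod i
    _ = ∑ t ∈ (Finset.univ : Finset (Fin (m+1))).powerset,
          (∏ s ∈ t, W s) * S ((m+1) - t.card) := by
        have h1 : ∀ i : ℕ, ∏ s, (W s + (i:R)) = ∑ t ∈ (Finset.univ : Finset (Fin (m+1))).powerset,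
            (∏ s ∈ t, W s) * ((i:R)) ^ ((m+1) - t.card) := by
          intro i
          rw [Finset.prod_add]
          refine Finset.sum_congr rfl fun t ht => ?_
          rw [Finset.prod_const, Finset.card_sdiff_of_subset (Finset.subset_univ t), Finset.card_univ,
            Fintype.card_fin]
        simp_rw [h1]
        rw [Finset.sum_comm]
        refine Finset.sum_congr rfl fun t _ => ?_
        rw [← Finset.mul_sum]
    _ = -(v + ∑ j, w j) + S (m+1) := by
        have hzero : ∀ t ∈ (Finset.univ : Finset (Fin (m+1))).powerset,
            t ∉ insert (∅ : Finset (Fin (m+1))) (Finset.univ.image fun s => {s}) →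
            (∏ s ∈ t, W s) * S ((m+1) - t.card) = 0 := by
          intro t _ ht
          simp only [Finset.mem_insert, Finset.mem_image, Finset.mem_univ, true_and,
            not_or, not_exists] at ht
          have hc2 : 2 ≤ t.card := by
            rcases Nat.lt_or_ge t.card 2 with h | h
            · interval_cases h' : t.card
              · exact absurd (Finset.card_eq_zero.1 h') ht.1
              · obtain ⟨a, rfl⟩ := Finset.card_eq_one.1 h'
                exact absurd rfl (ht.2 a)
            · exact h
          have hlt : (m+1) - t.card < (m+1) - 1 := by
            have hcu : t.card ≤ m + 1 := by simpa using Finset.card_le_univ t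
            omega
          rw [show S ((m+1) - t.card) = 0 from sum_range_natCast_pow_eq_zero (m+1) hlt,
            mul_zero]
        rw [← Finset.sum_subset (by
          intro t ht
          simp only [Finset.mem_insert, Finset.mem_image, Finset.mem_univ, true_and] at ht
          exact Finset.mem_powerset.2 (Finset.subset_univ t)) hzero]
        rw [Finset.sum_insert (by
          simp only [Finset.mem_image, Finset.mem_univ, true_and, not_exists]
          intro a h
          exact Finset.singleton_ne_empty a h)]
        rw [Finset.sum_image (fun a _ b _ h => Finset.singleton_injective h)]
        simp only [Finset.prod_empty, Finset.card_empty, Nat.sub_zero, one_mul,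
          Finset.prod_singleton, Finset.card_singleton, Nat.add_sub_cancel]
        have hSm : S m = -1 := by
          have := sum_range_natCast_pow_card_sub_one (R := R) (m+1)
          simpa using this
        rw [hsum, hSm]
        simp only [mul_neg_one]
        rw [Finset.sum_neg_distrib]
        ring
end key

lemma key_identity' {R : Type*} [CommRing R] (p m : ℕ) (hm : m + 1 = p) [Fact p.Prime]
    [CharP R p] (v : R) (w : Fin m → R) :
    ∑ i ∈ Finset.range p, ((v + i) * ∏ j, (w j + i))
      = -(v + ∑ j, w j) + ∑ i ∈ Finset.range p, ((i : R)) ^ p := by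
  subst hm
  exact key_identity m v w
theorem stmt_3 (p n : ℕ) [Fact p.Prime] (hn : 0 < n)
    (i : Fin (p - 1) → ℕ) (hmono : Monotone i) (hne : ∃ j, i j ≠ 0)
    (d : ℕ) (hd : d = 1 + ∑ j, p ^ i j) :
    IsGAPN p (fun x : GaloisField p n => x ^ d) ↔
      {x : GaloisField p n | x + ∑ j, x ^ p ^ i j = 0} =
        Set.range (algebraMap (ZMod p) (GaloisField p n)) := by
  set F := GaloisField p n with hF
  have hp : p.Prime := Fact.out
  have hm : (p - 1) + 1 = p := by have := hp.two_le; omega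
  set φ : F → F := fun x => x + ∑ j, x ^ p ^ i j with hφ
  set C : F := ∑ k ∈ Finset.range p, ((k : F)) ^ p with hC
  -- φ is additive
  have hφadd : ∀ x y : F, φ (x + y) = φ x + φ y := by
    intro x y
    simp only [hφ]
    rw [Finset.sum_congr rfl (fun j _ => add_pow_char_pow x y p (i j)),
      Finset.sum_add_distrib]
    ring
  -- φ kills the prime field
  have hφ0 : ∀ c : ZMod p, φ (algebraMap (ZMod p) F c) = 0 := by
    intro c
    set z : F := algebraMap (ZMod p) F c with hz
    have hzp : ∀ k : ℕ, z ^ p ^ k = z := by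
      intro k
      induction k with
      | zero => simp
      | succ k ih =>
          rw [pow_succ, pow_mul, ih, hz, ← map_pow, ZMod.pow_card]
    simp only [hφ]
    rw [Finset.sum_congr rfl (fun j _ => hzp (i j)), Finset.sum_const, Finset.card_univ,
      Fintype.card_fin, nsmul_eq_mul]
    have : (1 : F) + ((p - 1 : ℕ) : F) = ((p : ℕ) : F) := by
      rw [← Nat.cast_one, ← Nat.cast_add]
      congr 1
      omega
    calc z + ((p - 1 : ℕ) : F) * z = ((1 : F) + ((p - 1 : ℕ) : F)) * z := by ring
      _ = 0 := by rw [this, CharP.cast_eq_zero]; ring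
  -- the key identity
  have hkey : ∀ a : F, a ≠ 0 → ∀ x : F,
      ∑ k ∈ Finset.range p, (x + k • a) ^ d = a ^ d * (-(φ (x / a)) + C) := by
    intro a ha x
    set y : F := x / a with hy
    have hx : ∀ k : ℕ, x + k • a = a * (y + k) := by
      intro k
      rw [nsmul_eq_mul, mul_add, mul_div_cancel₀ x ha]
      ring
    have hterm : ∀ k : ℕ, (x + k • a) ^ d
        = a ^ d * ((y + k) * ∏ j, (y ^ p ^ i j + k)) := by
      intro k
      rw [hx k, mul_pow]
      congr 1
      rw [hd, pow_add, pow_one, ← Finset.prod_pow_eq_pow_sum]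
      congr 1
      refine Finset.prod_congr rfl fun j _ => ?_
      rw [add_pow_char_pow, natCast_pow_pow]
    rw [Finset.sum_congr rfl (fun k _ => hterm k), ← Finset.mul_sum,
      key_identity' p (p - 1) hm y (fun j => y ^ p ^ i j)]
  -- description of the GAPN sets
  have hset : ∀ a : F, a ≠ 0 → ∀ b : F,
      {x : F | ∑ k ∈ Finset.range p, (x + k • a) ^ d = b}
        = (fun y => a * y) '' {y : F | φ y = C - b / a ^ d} := by
    intro a ha b
    have had : a ^ d ≠ 0 := pow_ne_zero _ ha
    ext x
    simp only [Set.mem_setOf_eq, Set.mem_image]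
    rw [hkey a ha x]
    constructor
    · intro h
      refine ⟨x / a, ?_, mul_div_cancel₀ x ha⟩
      have h2 : -(φ (x / a)) + C = b / a ^ d := by
        field_simp at h ⊢
        linear_combination h
      show φ (x / a) = C - b / a ^ d
      linear_combination -h2
    · rintro ⟨y, hy, rfl⟩
      rw [mul_div_cancel_left₀ y ha, (hy : φ y = _)]
      rw [neg_sub, sub_add_cancel, mul_div_cancel₀ b had]
  -- translation of fibers
  have hfiber : ∀ c : F, {y : F | φ y = c}.ncard ≤ {y : F | φ y = 0}.ncard := by
    intro c
    rcases Set.eq_empty_or_nonempty {y : F | φ y = c} with h | ⟨y0, hy0⟩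
    · simp [h]
    · simp only [Set.mem_setOf_eq] at hy0
      have : {y : F | φ y = c} = (fun z => z + y0) '' {y : F | φ y = 0} := by
        ext y
        simp only [Set.mem_setOf_eq, Set.mem_image]
        constructor
        · intro hy
          refine ⟨y - y0, ?_, by ring⟩
          have h3 := hφadd (y - y0) y0
          rw [sub_add_cancel, hy, hy0] at h3
          show φ (y - y0) = 0
          linear_combination -h3
        · rintro ⟨z, hz, rfl⟩
          rw [hφadd, (hz : φ z = 0), hy0, zero_add]
      rw [this, Set.ncard_image_of_injective _ (add_left_injective y0)]
  -- the ncard of the range of the algebra map is p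
  have hrange : (Set.range (algebraMap (ZMod p) F)).ncard = p := by
    have hinj : Function.Injective (algebraMap (ZMod p) F) := (algebraMap (ZMod p) F).injective
    rw [← Nat.card_coe_set_eq, Nat.card_range_of_injective hinj, Nat.card_zmod]
  have hsub : Set.range (algebraMap (ZMod p) F) ⊆ {y : F | φ y = 0} := by
    rintro _ ⟨c, rfl⟩
    exact hφ0 c
  constructor
  · intro hG
    have h1 := hG 1 one_ne_zero C
    have heq : {x : F | ∑ k ∈ Finset.range p, ((fun x : F => x ^ d) (x + k • (1:F))) = C}
        = {y : F | φ y = 0} := by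
      ext x
      simp only [Set.mem_setOf_eq]
      rw [hkey 1 one_ne_zero x, div_one, one_pow, one_mul]
      constructor
      · intro h; linear_combination -h
      · intro h; rw [h]; ring
    rw [heq] at h1
    exact (Set.eq_of_subset_of_ncard_le hsub (by rwa [hrange]) (Set.toFinite _)).symm
  · intro hK a ha b
    have h1 : {x : F | ∑ k ∈ Finset.range p, ((fun x : F => x ^ d) (x + k • a)) = b}
        = (fun y => a * y) '' {y : F | φ y = C - b / a ^ d} := hset a ha b
    rw [h1, Set.ncard_image_of_injective _ (mul_right_injective₀ ha)]
    calc {y : F | φ y = C - b / a ^ d}.ncard ≤ {y : F | φ y = 0}.ncard := hfiber _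
      _ = p := by rw [hK]; exact hrange
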